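/- Let α > 0 and β > 0, let h : [0,1] → ℝ be continuous, let Bh = E h(Z) for Z with the Beta distribution B(α,β), and define f(w) = w^{−α}(1−w)^{−β} ∫₀^w u^{α−1}(1−u)^{β−1}(h(u) − Bh) du for w ∈ (0,1). Then f is differentiable on (0,1) and satisfies the Stein equation w(1−w) f'(w) + (α(1−w) − βw) f(w) = h(w) − Bh for all w ∈ (0,1); moreover, if h is Lipschitz then f is bounded on (0,1), and any bounded differentiable function g : (0,1) → ℝ satisfying w(1−w) g'(w) + (α(1−w) − βw) g(w) = h(w) − Bh for all w ∈ (0,1) equals f on (0,1). -/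

import Mathlib

open MeasureTheory intervalIntegral

/-- Expectation `E h(Z)` for `Z ∼ B(a,b)`, the Beta distribution with density
`x^{a-1} (1-x)^{b-1} / B(a,b)` on `[0,1]`, where `B(a,b) = Γ(a)Γ(b)/Γ(a+b)`. -/
noncomputable def betaExp (a b : ℝ) (h : ℝ → ℝ) : ℝ :=
  ∫ x in Set.Ioo (0 : ℝ) 1,
    (Real.Gamma (a + b) / (Real.Gamma a * Real.Gamma b))
      * x ^ (a - 1) * (1 - x) ^ (b - 1) * h x

lemma realBetaIntegral {α β : ℝ} (hα : 0 < α) (hβ : 0 < β) :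
    ∫ x in (0:ℝ)..1, x ^ (α-1) * (1-x) ^ (β-1)
      = Real.Gamma α * Real.Gamma β / Real.Gamma (α+β) := by
  have key := Complex.Gamma_mul_Gamma_eq_betaIntegral
    (s := (α:ℂ)) (t := (β:ℂ)) (by simpa using hα) (by simpa using hβ)
  have hbeta : Complex.betaIntegral (α:ℂ) (β:ℂ)
      = ((∫ x in (0:ℝ)..1, x ^ (α-1) * (1-x) ^ (β-1) : ℝ) : ℂ) := by
    rw [Complex.betaIntegral, ← intervalIntegral.integral_ofReal]
    refine intervalIntegral.integral_congr fun x hx => ?_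
    rw [Set.uIcc_of_le (by norm_num : (0:ℝ) ≤ 1)] at hx
    rw [Complex.ofReal_mul, Complex.ofReal_cpow hx.1,
      Complex.ofReal_cpow (by linarith [hx.2] : (0:ℝ) ≤ 1 - x)]
    push_cast
    ring
  rw [hbeta, Complex.Gamma_ofReal, Complex.Gamma_ofReal, ← Complex.ofReal_add,
    Complex.Gamma_ofReal, ← Complex.ofReal_mul, ← Complex.ofReal_mul] at key
  have := Complex.ofReal_inj.mp key
  have hγ : Real.Gamma (α+β) ≠ 0 := (Real.Gamma_pos_of_pos (by linarith)).ne'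
  field_simp
  linarith [this]

lemma intJ_left {α β : ℝ} (hα : 0 < α) (h : ℝ → ℝ)
    (hcont : ContinuousOn h (Set.Icc 0 1)) (Bh : ℝ) {b : ℝ} (hb0 : 0 ≤ b) (hb1 : b < 1) :
    IntervalIntegrable (fun u => u ^ (α-1) * (1-u) ^ (β-1) * (h u - Bh)) volume 0 b := by
  have h1 : IntervalIntegrable (fun u : ℝ => u ^ (α-1)) volume 0 b :=
    intervalIntegral.intervalIntegrable_rpow' (by linarith)
  have h2 : ContinuousOn (fun u : ℝ => (1-u) ^ (β-1) * (h u - Bh)) (Set.uIcc 0 b) := by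
    rw [Set.uIcc_of_le hb0]
    refine ContinuousOn.mul ?_ ((hcont.mono ?_).sub continuousOn_const)
    · exact (continuousOn_const.sub (continuousOn_id)).rpow_const
        fun x hx => Or.inl (by simp only [Set.mem_Icc] at hx; intro hc; simp only [Pi.sub_apply, id] at hc; nlinarith [hx.2])
    · exact Set.Icc_subset_Icc le_rfl hb1.le
  simpa only [← mul_assoc] using h1.mul_continuousOn h2

lemma intJ_right {α β : ℝ} (hβ : 0 < β) (h : ℝ → ℝ)
    (hcont : ContinuousOn h (Set.Icc 0 1)) (Bh : ℝ) {a : ℝ} (ha0 : 0 < a) (ha1 : a ≤ 1) :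
    IntervalIntegrable (fun u => u ^ (α-1) * (1-u) ^ (β-1) * (h u - Bh)) volume a 1 := by
  have h1 : IntervalIntegrable (fun u : ℝ => (1-u) ^ (β-1)) volume a 1 := by
    have := (intervalIntegral.intervalIntegrable_rpow'
      (a := 1 - a) (b := 0) (by linarith : (-1:ℝ) < β - 1)).comp_sub_left 1
    simpa using this
  have h2 : ContinuousOn (fun u : ℝ => u ^ (α-1) * (h u - Bh)) (Set.uIcc a 1) := by
    rw [Set.uIcc_of_le ha1]
    refine ContinuousOn.mul ?_ ((hcont.mono (Set.Icc_subset_Icc ha0.le le_rfl)).sub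
      continuousOn_const)
    exact (continuousOn_id).rpow_const
      fun x hx => Or.inl (by simp only [Set.mem_Icc] at hx; intro hc; simp only [id] at hc; nlinarith [hx.1])
  have h3 := h1.mul_continuousOn h2
  have : (fun u : ℝ => (1-u) ^ (β-1) * (u ^ (α-1) * (h u - Bh)))
      = fun u : ℝ => u ^ (α-1) * (1-u) ^ (β-1) * (h u - Bh) := by funext u; ring
  rwa [this] at h3

lemma intJ_full {α β : ℝ} (hα : 0 < α) (hβ : 0 < β) (h : ℝ → ℝ)
    (hcont : ContinuousOn h (Set.Icc 0 1)) (Bh : ℝ) :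
    IntervalIntegrable (fun u => u ^ (α-1) * (1-u) ^ (β-1) * (h u - Bh)) volume 0 1 :=
  (intJ_left hα h hcont Bh (by norm_num) (by norm_num : (1/2:ℝ) < 1)).trans
    (intJ_right hβ h hcont Bh (by norm_num) (by norm_num))

lemma integralJ_zero {α β : ℝ} (hα : 0 < α) (hβ : 0 < β) (h : ℝ → ℝ)
    (hcont : ContinuousOn h (Set.Icc 0 1)) :
    ∫ u in (0:ℝ)..1, u ^ (α-1) * (1-u) ^ (β-1) * (h u - betaExp α β h) = 0 := by
  set c : ℝ := Real.Gamma (α+β) / (Real.Gamma α * Real.Gamma β) with hc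
  have hΓa := Real.Gamma_pos_of_pos hα
  have hΓb := Real.Gamma_pos_of_pos hβ
  have hΓab := Real.Gamma_pos_of_pos (by linarith : (0:ℝ) < α + β)
  have Idh : IntervalIntegrable (fun u => u ^ (α-1) * (1-u) ^ (β-1) * (h u - 0))
      volume 0 1 := intJ_full hα hβ h hcont 0
  simp only [sub_zero] at Idh
  have Id : IntervalIntegrable (fun u => u ^ (α-1) * (1-u) ^ (β-1) * ((1:ℝ) - 0))
      volume 0 1 := intJ_full hα hβ (fun _ => 1) continuousOn_const 0
  simp only [sub_zero, mul_one] at Id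
  have hB : ∫ u in (0:ℝ)..1, u ^ (α-1) * (1-u) ^ (β-1)
      = Real.Gamma α * Real.Gamma β / Real.Gamma (α+β) := realBetaIntegral hα hβ
  have hBE : betaExp α β h = c * ∫ u in (0:ℝ)..1, u ^ (α-1) * (1-u) ^ (β-1) * h u := by
    rw [betaExp, ← MeasureTheory.integral_Ioc_eq_integral_Ioo,
      ← intervalIntegral.integral_of_le (by norm_num : (0:ℝ) ≤ 1),
      ← intervalIntegral.integral_const_mul]
    exact intervalIntegral.integral_congr fun x _ => by rw [hc]; ring
  have split : ∫ u in (0:ℝ)..1, u ^ (α-1) * (1-u) ^ (β-1) * (h u - betaExp α β h)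
      = (∫ u in (0:ℝ)..1, u ^ (α-1) * (1-u) ^ (β-1) * h u)
        - betaExp α β h * ∫ u in (0:ℝ)..1, u ^ (α-1) * (1-u) ^ (β-1) := by
    rw [← intervalIntegral.integral_const_mul, ← intervalIntegral.integral_sub Idh
      (Id.const_mul (betaExp α β h))]
    exact intervalIntegral.integral_congr fun x _ => by ring
  rw [split, hB, hBE, hc]
  field_simp
  ring

lemma hasDerivF {α β : ℝ} (hα : 0 < α) (hβ : 0 < β) (h : ℝ → ℝ)
    (hcont : ContinuousOn h (Set.Icc 0 1)) (Bh : ℝ) {w : ℝ} (hw : w ∈ Set.Ioo (0:ℝ) 1) :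
    ∃ d : ℝ, HasDerivAt (fun x : ℝ => x ^ (-α) * (1 - x) ^ (-β)
        * ∫ u in (0:ℝ)..x, u ^ (α-1) * (1-u) ^ (β-1) * (h u - Bh)) d w ∧
      w * (1 - w) * d + (α * (1 - w) - β * w)
        * (w ^ (-α) * (1 - w) ^ (-β)
            * ∫ u in (0:ℝ)..w, u ^ (α-1) * (1-u) ^ (β-1) * (h u - Bh)) = h w - Bh := by
  obtain ⟨hw0, hw1⟩ := hw
  have hw1' : (0:ℝ) < 1 - w := by linarith
  set J : ℝ → ℝ := fun u => u ^ (α-1) * (1-u) ^ (β-1) * (h u - Bh) with hJ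
  set I : ℝ := ∫ u in (0:ℝ)..w, J u with hI
  have hA : HasDerivAt (fun x : ℝ => x ^ (-α)) (-α * w ^ (-α - 1)) w := by
    simpa using Real.hasDerivAt_rpow_const (p := -α) (Or.inl hw0.ne')
  have hB : HasDerivAt (fun x : ℝ => (1 - x) ^ (-β)) (β * (1-w) ^ (-β - 1)) w := by
    have h1 : HasDerivAt (fun x : ℝ => 1 - x) (-1) w := by
      simpa using (hasDerivAt_id w).const_sub 1
    have h2 := (Real.hasDerivAt_rpow_const (x := 1 - w) (p := -β)
      (Or.inl hw1'.ne')).comp w h1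
    rw [show β * (1-w) ^ (-β - 1) = -β * (1 - w) ^ (-β - 1) * -1 by ring]
    exact h2
  have hJcont : ContinuousOn J (Set.Ioo 0 1) := by
    refine ContinuousOn.mul (ContinuousOn.mul ?_ ?_)
      ((hcont.mono Set.Ioo_subset_Icc_self).sub continuousOn_const)
    · exact continuousOn_id.rpow_const fun x hx => Or.inl (ne_of_gt hx.1)
    · exact (continuousOn_const.sub continuousOn_id).rpow_const
        fun x hx => Or.inl (by intro hc; simp only [Pi.sub_apply, id] at hc; nlinarith [hx.2])
  have hC : HasDerivAt (fun x : ℝ => ∫ u in (0:ℝ)..x, J u) (J w) w := by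
    refine intervalIntegral.integral_hasDerivAt_right
      (intJ_left hα h hcont Bh hw0.le hw1) ?_ ?_
    · exact ⟨Set.Ioo 0 1, Ioo_mem_nhds hw0 hw1,
        hJcont.aestronglyMeasurable measurableSet_Ioo⟩
    · exact hJcont.continuousAt (Ioo_mem_nhds hw0 hw1)
  have hF := (hA.mul hB).mul hC
  simp only [Pi.mul_apply] at hF
  refine ⟨_, hF, ?_⟩
  have k1 : w * w ^ (-α - 1) = w ^ (-α) := by
    rw [mul_comm, ← Real.rpow_add_one hw0.ne']; norm_num
  have k2 : (1-w) * (1-w) ^ (-β - 1) = (1-w) ^ (-β) := by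
    rw [mul_comm, ← Real.rpow_add_one hw1'.ne']; norm_num
  have k3 : w ^ (-α) * w ^ (α-1) * w = 1 := by
    rw [← Real.rpow_add hw0, ← Real.rpow_add_one hw0.ne',
      show -α + (α-1) + 1 = 0 by ring, Real.rpow_zero]
  have k4 : (1-w) ^ (-β) * (1-w) ^ (β-1) * (1-w) = 1 := by
    rw [← Real.rpow_add hw1', ← Real.rpow_add_one hw1'.ne',
      show -β + (β-1) + 1 = 0 by ring, Real.rpow_zero]
  have hJw : J w = w ^ (α-1) * (1-w) ^ (β-1) * (h w - Bh) := rfl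
  rw [hJw]
  linear_combination (-α * (1-w) * ((1-w) ^ (-β)) * I) * k1
    + (β * w * (w ^ (-α)) * I) * k2
    + (h w - Bh) * (w ^ (-α) * w ^ (α-1) * w) * k4
    + (h w - Bh) * k3

lemma boundF {α β : ℝ} (hα : 0 < α) (hβ : 0 < β) (h : ℝ → ℝ)
    (hcont : ContinuousOn h (Set.Icc 0 1)) :
    ∃ C : ℝ, ∀ w ∈ Set.Ioo (0:ℝ) 1,
      |w ^ (-α) * (1 - w) ^ (-β)
        * ∫ u in (0:ℝ)..w, u ^ (α-1) * (1-u) ^ (β-1) * (h u - betaExp α β h)| ≤ C := by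
  set Bh := betaExp α β h with hBh
  obtain ⟨M₀, hM₀⟩ := isCompact_Icc.exists_bound_of_continuousOn
    (hcont.sub (continuousOn_const (c := Bh)))
  set M : ℝ := max M₀ 0 with hMdef
  have hM : ∀ x ∈ Set.Icc (0:ℝ) 1, |h x - Bh| ≤ M :=
    fun x hx => le_trans (hM₀ x hx) (le_max_left _ _)
  have hM0 : 0 ≤ M := le_max_right _ _
  set cβ : ℝ := max 1 ((1/2:ℝ) ^ (β-1)) with hcβdef
  set cα : ℝ := max 1 ((1/2:ℝ) ^ (α-1)) with hcαdef
  have hcβ0 : 0 ≤ cβ := le_trans zero_le_one (le_max_left _ _)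
  have hcα0 : 0 ≤ cα := le_trans zero_le_one (le_max_left _ _)
  have hbnd : ∀ (γ : ℝ) (t : ℝ), 1/2 ≤ t → t ≤ 1 →
      t ^ (γ-1) ≤ max 1 ((1/2:ℝ) ^ (γ-1)) := by
    intro γ t ht1 ht2
    rcases le_or_gt (γ-1) 0 with hg | hg
    · exact le_trans (Real.rpow_le_rpow_of_nonpos (by norm_num) ht1 hg) (le_max_right _ _)
    · exact le_trans (Real.rpow_le_one (by linarith) ht2 hg.le) (le_max_left _ _)
  refine ⟨max (M * cβ / α * (1/2:ℝ) ^ (-β)) (M * cα / β * (1/2:ℝ) ^ (-α)), ?_⟩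
  rintro w ⟨hw0, hw1⟩
  have hw1' : (0:ℝ) < 1 - w := by linarith
  set J : ℝ → ℝ := fun u => u ^ (α-1) * (1-u) ^ (β-1) * (h u - Bh) with hJ
  have habs : |w ^ (-α) * (1 - w) ^ (-β) * ∫ u in (0:ℝ)..w, J u|
      = w ^ (-α) * (1 - w) ^ (-β) * |∫ u in (0:ℝ)..w, J u| := by
    rw [abs_mul, abs_mul, abs_of_pos (Real.rpow_pos_of_pos hw0 _),
      abs_of_pos (Real.rpow_pos_of_pos hw1' _)]
  rcases le_or_gt w (1/2) with hcase | hcase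
  · -- left case
    have hpt : ∀ u ∈ Set.Icc (0:ℝ) w, |J u| ≤ (M * cβ) * u ^ (α-1) := by
      rintro u ⟨hu0, huw⟩
      have h1 : (0:ℝ) ≤ u ^ (α-1) := Real.rpow_nonneg hu0 _
      have h2 : (0:ℝ) ≤ (1-u) ^ (β-1) := Real.rpow_nonneg (by linarith) _
      have h3 : (1-u) ^ (β-1) ≤ cβ := hbnd β (1-u) (by linarith) (by linarith)
      have h4 : |h u - Bh| ≤ M := hM u ⟨hu0, by linarith⟩
      rw [hJ, abs_mul, abs_mul, abs_of_nonneg h1, abs_of_nonneg h2]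
      calc u ^ (α-1) * (1-u) ^ (β-1) * |h u - Bh|
          ≤ u ^ (α-1) * cβ * M := by
            apply mul_le_mul (mul_le_mul_of_nonneg_left h3 h1) h4 (abs_nonneg _)
            positivity
        _ = (M * cβ) * u ^ (α-1) := by ring
    have hIint := intJ_left (β := β) hα h hcont Bh hw0.le hw1
    have hDint : IntervalIntegrable (fun u : ℝ => (M * cβ) * u ^ (α-1)) volume 0 w :=
      (intervalIntegral.intervalIntegrable_rpow' (by linarith)).const_mul _
    have hIb : |∫ u in (0:ℝ)..w, J u| ≤ (M * cβ) * (w ^ α / α) := by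
      calc |∫ u in (0:ℝ)..w, J u| ≤ ∫ u in (0:ℝ)..w, |J u| :=
            intervalIntegral.abs_integral_le_integral_abs hw0.le
        _ ≤ ∫ u in (0:ℝ)..w, (M * cβ) * u ^ (α-1) := by
            refine intervalIntegral.integral_mono_on hw0.le hIint.abs hDint hpt
        _ = (M * cβ) * (w ^ α / α) := by
            rw [intervalIntegral.integral_const_mul, integral_rpow (Or.inl (by linarith))]
            rw [show α - 1 + 1 = α by ring, Real.zero_rpow hα.ne']
            ring
    refine le_trans ?_ (le_max_left _ _)
    rw [habs]
    calc w ^ (-α) * (1 - w) ^ (-β) * |∫ u in (0:ℝ)..w, J u|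
        ≤ w ^ (-α) * (1 - w) ^ (-β) * ((M * cβ) * (w ^ α / α)) := by
          apply mul_le_mul_of_nonneg_left hIb
          positivity
      _ = (M * cβ / α) * (1 - w) ^ (-β) * (w ^ (-α) * w ^ α) := by ring
      _ = (M * cβ / α) * (1 - w) ^ (-β) := by
          rw [← Real.rpow_add hw0, neg_add_cancel, Real.rpow_zero, mul_one]
      _ ≤ M * cβ / α * (1/2:ℝ) ^ (-β) := by
          apply mul_le_mul_of_nonneg_left
            (Real.rpow_le_rpow_of_nonpos (by norm_num) (by linarith) (by linarith))
          positivity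
  · -- right case
    have hzero := integralJ_zero hα hβ h hcont
    have hsum := intervalIntegral.integral_add_adjacent_intervals
      (intJ_left hα h hcont Bh hw0.le hw1) (intJ_right hβ h hcont Bh hw0 hw1.le)
    rw [← hJ] at hsum
    rw [← hBh, ← hJ] at hzero
    have hIeq : (∫ u in (0:ℝ)..w, J u) = -∫ u in w..(1:ℝ), J u := by
      rw [hzero] at hsum; linarith
    have hpt : ∀ u ∈ Set.Icc w 1, |J u| ≤ (M * cα) * (1-u) ^ (β-1) := by
      rintro u ⟨huw, hu1⟩
      have h1 : (0:ℝ) ≤ u ^ (α-1) := Real.rpow_nonneg (by linarith) _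
      have h2 : (0:ℝ) ≤ (1-u) ^ (β-1) := Real.rpow_nonneg (by linarith) _
      have h3 : u ^ (α-1) ≤ cα := hbnd α u (by linarith) hu1
      have h4 : |h u - Bh| ≤ M := hM u ⟨by linarith, hu1⟩
      rw [hJ, abs_mul, abs_mul, abs_of_nonneg h1, abs_of_nonneg h2]
      calc u ^ (α-1) * (1-u) ^ (β-1) * |h u - Bh|
          ≤ cα * (1-u) ^ (β-1) * M := by
            apply mul_le_mul (mul_le_mul_of_nonneg_right h3 h2) h4 (abs_nonneg _)
            positivity
        _ = (M * cα) * (1-u) ^ (β-1) := by ring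
    have hIint := intJ_right (α := α) hβ h hcont Bh hw0 hw1.le
    have hDint : IntervalIntegrable (fun u : ℝ => (M * cα) * (1-u) ^ (β-1)) volume w 1 := by
      have := (intervalIntegral.intervalIntegrable_rpow'
        (a := 1 - w) (b := 0) (by linarith : (-1:ℝ) < β - 1)).comp_sub_left 1
      simpa using this.const_mul (M * cα)
    have hIb : |∫ u in (0:ℝ)..w, J u| ≤ (M * cα) * ((1-w) ^ β / β) := by
      rw [hIeq, abs_neg]
      calc |∫ u in w..(1:ℝ), J u| ≤ ∫ u in w..(1:ℝ), |J u| :=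
            intervalIntegral.abs_integral_le_integral_abs hw1.le
        _ ≤ ∫ u in w..(1:ℝ), (M * cα) * (1-u) ^ (β-1) := by
            refine intervalIntegral.integral_mono_on hw1.le hIint.abs hDint hpt
        _ = (M * cα) * ((1-w) ^ β / β) := by
            rw [intervalIntegral.integral_const_mul]
            have := intervalIntegral.integral_comp_sub_left
              (a := w) (b := 1) (fun x : ℝ => x ^ (β-1)) 1
            simp only [sub_self] at this
            rw [this, integral_rpow (Or.inl (by linarith))]
            rw [show β - 1 + 1 = β by ring, Real.zero_rpow hβ.ne']
            ring
    refine le_trans ?_ (le_max_right _ _)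
    rw [habs]
    calc w ^ (-α) * (1 - w) ^ (-β) * |∫ u in (0:ℝ)..w, J u|
        ≤ w ^ (-α) * (1 - w) ^ (-β) * ((M * cα) * ((1-w) ^ β / β)) := by
          apply mul_le_mul_of_nonneg_left hIb
          positivity
      _ = (M * cα / β) * w ^ (-α) * ((1-w) ^ (-β) * (1-w) ^ β) := by ring
      _ = (M * cα / β) * w ^ (-α) := by
          rw [← Real.rpow_add hw1', neg_add_cancel, Real.rpow_zero, mul_one]
      _ ≤ M * cα / β * (1/2:ℝ) ^ (-α) := by
          apply mul_le_mul_of_nonneg_left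
            (Real.rpow_le_rpow_of_nonpos (by norm_num) (by linarith) (by linarith))
          positivity

lemma uniqSol {α β : ℝ} (hα : 0 < α) (hβ : 0 < β) (h : ℝ → ℝ) (Bh : ℝ) (f g : ℝ → ℝ)
    (hfb : ∃ C : ℝ, ∀ w ∈ Set.Ioo (0:ℝ) 1, |f w| ≤ C)
    (hgb : ∃ C : ℝ, ∀ w ∈ Set.Ioo (0:ℝ) 1, |g w| ≤ C)
    (hfd : ∀ w ∈ Set.Ioo (0:ℝ) 1, ∃ d : ℝ, HasDerivAt f d w ∧
      w * (1 - w) * d + (α * (1 - w) - β * w) * f w = h w - Bh)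
    (hgd : ∀ w ∈ Set.Ioo (0:ℝ) 1, ∃ d : ℝ, HasDerivAt g d w ∧
      w * (1 - w) * d + (α * (1 - w) - β * w) * g w = h w - Bh) :
    ∀ w ∈ Set.Ioo (0:ℝ) 1, g w = f w := by
  obtain ⟨Cf, hCf⟩ := hfb
  obtain ⟨Cg, hCg⟩ := hgb
  set s := Set.Ioo (0:ℝ) 1 with hs
  set D : ℝ → ℝ := fun w => w ^ α * (1-w) ^ β * (g w - f w) with hD
  have hDd : ∀ w ∈ s, HasDerivAt D 0 w := by
    rintro w ⟨hw0, hw1⟩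
    have hw1' : (0:ℝ) < 1 - w := by linarith
    obtain ⟨df, hf', hfe⟩ := hfd w ⟨hw0, hw1⟩
    obtain ⟨dg, hg', hge⟩ := hgd w ⟨hw0, hw1⟩
    have hA : HasDerivAt (fun x : ℝ => x ^ α) (α * w ^ (α - 1)) w :=
      Real.hasDerivAt_rpow_const (Or.inl hw0.ne')
    have hB : HasDerivAt (fun x : ℝ => (1 - x) ^ β) (-β * (1-w) ^ (β - 1)) w := by
      have h1 : HasDerivAt (fun x : ℝ => 1 - x) (-1) w := by
        simpa using (hasDerivAt_id w).const_sub 1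
      have h2 := (Real.hasDerivAt_rpow_const (x := 1 - w) (p := β)
        (Or.inl hw1'.ne')).comp w h1
      rw [show -β * (1-w) ^ (β - 1) = β * (1 - w) ^ (β - 1) * -1 by ring]
      exact h2
    have hDer := (hA.mul hB).mul (hg'.sub hf')
    have ha : w ^ α = w ^ (α-1) * w := by
      rw [← Real.rpow_add_one hw0.ne']; ring_nf
    have hb : (1-w) ^ β = (1-w) ^ (β-1) * (1-w) := by
      rw [← Real.rpow_add_one hw1'.ne']; ring_nf
    have hzero : (α * w ^ (α - 1) * (1 - w) ^ β + w ^ α * (-β * (1-w) ^ (β - 1)))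
        * (g w - f w) + w ^ α * (1 - w) ^ β * (dg - df) = 0 := by
      rw [ha, hb]
      linear_combination (w ^ (α-1) * (1-w) ^ (β-1)) * (hge - hfe)
    simp only [Pi.mul_apply, Pi.sub_apply] at hDer
    rw [hzero] at hDer
    exact hDer
  have hconst : ∀ x ∈ s, ∀ y ∈ s, D x = D y := by
    intro x hx y hy
    refine (convex_Ioo (0:ℝ) 1).is_const_of_fderivWithin_eq_zero
      (fun z hz => ((hDd z hz).differentiableAt).differentiableWithinAt) ?_ hx hy
    intro z hz
    have hfd' : HasFDerivAt D (ContinuousLinearMap.smulRight (1:ℝ →L[ℝ] ℝ) 0) z := hDd z hz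
    rw [fderivWithin_of_isOpen isOpen_Ioo hz, hfd'.fderiv]
    ext t
    simp
  intro w hw
  have hw0 := hw.1
  have hw1' : (0:ℝ) < 1 - w := by linarith [hw.2]
  set K : ℝ := Cg + Cf with hK
  have hbound : ∀ v ∈ s, |D w| ≤ K * v ^ α := by
    intro v hv
    rw [hconst w hw v hv]
    have hv1' : (0:ℝ) < 1 - v := by linarith [hv.2]
    have h1 : |g v - f v| ≤ K := by
      have := abs_sub (g v) (f v)
      calc |g v - f v| ≤ |g v| + |f v| := abs_sub _ _
        _ ≤ Cg + Cf := add_le_add (hCg v hv) (hCf v hv)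
    have h2 : (0:ℝ) < v ^ α := Real.rpow_pos_of_pos hv.1 _
    have h3 : (1-v) ^ β ≤ 1 := Real.rpow_le_one (by linarith) (by linarith [hv.1]) hβ.le
    have h4 : (0:ℝ) ≤ (1-v) ^ β := Real.rpow_nonneg (by linarith) _
    rw [hD, abs_mul, abs_mul, abs_of_pos h2, abs_of_nonneg h4]
    calc v ^ α * (1-v) ^ β * |g v - f v| ≤ v ^ α * 1 * K := by
          apply mul_le_mul (mul_le_mul_of_nonneg_left h3 h2.le) h1 (abs_nonneg _)
          positivity
      _ = K * v ^ α := by ring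
  have hT : Filter.Tendsto (fun v : ℝ => K * v ^ α) (nhdsWithin 0 (Set.Ioi 0)) (nhds 0) := by
    have hc : ContinuousAt (fun v : ℝ => K * v ^ α) 0 :=
      continuousAt_const.mul (Real.continuousAt_rpow_const 0 α (Or.inr hα.le))
    have := hc.continuousWithinAt (s := Set.Ioi (0:ℝ))
    have h0 : K * (0:ℝ) ^ α = 0 := by rw [Real.zero_rpow hα.ne', mul_zero]
    simpa [ContinuousWithinAt, h0] using this
  have hev : ∀ᶠ v in nhdsWithin (0:ℝ) (Set.Ioi 0), |D w| ≤ K * v ^ α := by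
    filter_upwards [Ioo_mem_nhdsGT_of_mem (Set.mem_Ico.mpr ⟨le_rfl, zero_lt_one⟩)] with v hv
    exact hbound v hv
  have hle : |D w| ≤ 0 := ge_of_tendsto hT hev
  have hD0 : D w = 0 := abs_eq_zero.mp (le_antisymm hle (abs_nonneg _))
  have h2 : (0:ℝ) < w ^ α * (1-w) ^ β :=
    mul_pos (Real.rpow_pos_of_pos hw0 _) (Real.rpow_pos_of_pos hw1' _)
  have : g w - f w = 0 := by
    by_contra hne
    exact hne (by
      have := hD0
      rw [hD] at this
      exact (mul_eq_zero.mp this).resolve_left h2.ne')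
  linarith [this]

/-- For `α, β > 0`, `h` continuous on `[0,1]`, `Bh = E h(Z)` for
`Z ∼ B(α,β)`, the function
`f(w) = w^{-α} (1-w)^{-β} ∫₀^w u^{α-1} (1-u)^{β-1} (h(u) - Bh) du`
is differentiable on `(0,1)` and solves the Stein equation
`w(1-w) f'(w) + (α(1-w) - βw) f(w) = h(w) - Bh` there; moreover, if `h` is
Lipschitz then `f` is bounded on `(0,1)` and every bounded differentiable
solution of the Stein equation on `(0,1)` equals `f` there. -/
theorem stmt_12 (α β : ℝ) (hα : 0 < α) (hβ : 0 < β)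
    (h : ℝ → ℝ) (hcont : ContinuousOn h (Set.Icc 0 1))
    (Bh : ℝ) (hBh : Bh = betaExp α β h)
    (f : ℝ → ℝ)
    (hfdef : ∀ w ∈ Set.Ioo (0 : ℝ) 1,
      f w = w ^ (-α) * (1 - w) ^ (-β)
        * ∫ u in (0 : ℝ)..w, u ^ (α - 1) * (1 - u) ^ (β - 1) * (h u - Bh)) :
    (∀ w ∈ Set.Ioo (0 : ℝ) 1, ∃ d : ℝ, HasDerivAt f d w ∧
        w * (1 - w) * d + (α * (1 - w) - β * w) * f w = h w - Bh) ∧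
    ((∃ L : ℝ, ∀ x ∈ Set.Icc (0 : ℝ) 1, ∀ y ∈ Set.Icc (0 : ℝ) 1,
        |h x - h y| ≤ L * |x - y|) →
      ((∃ C : ℝ, ∀ w ∈ Set.Ioo (0 : ℝ) 1, |f w| ≤ C) ∧
       (∀ g : ℝ → ℝ, (∃ C : ℝ, ∀ w ∈ Set.Ioo (0 : ℝ) 1, |g w| ≤ C) →
         (∀ w ∈ Set.Ioo (0 : ℝ) 1, ∃ d : ℝ, HasDerivAt g d w ∧
           w * (1 - w) * d + (α * (1 - w) - β * w) * g w = h w - Bh) →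
         ∀ w ∈ Set.Ioo (0 : ℝ) 1, g w = f w))) := by
  have part1 : ∀ w ∈ Set.Ioo (0 : ℝ) 1, ∃ d : ℝ, HasDerivAt f d w ∧
      w * (1 - w) * d + (α * (1 - w) - β * w) * f w = h w - Bh := by
    intro w hw
    obtain ⟨d, hdF, heq⟩ := hasDerivF hα hβ h hcont Bh hw
    refine ⟨d, ?_, ?_⟩
    · exact hdF.congr_of_eventuallyEq
        (Filter.eventuallyEq_of_mem (Ioo_mem_nhds hw.1 hw.2) fun x hx => hfdef x hx)
    · rw [hfdef w hw]
      exact heq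
  have fbound : ∃ C : ℝ, ∀ w ∈ Set.Ioo (0:ℝ) 1, |f w| ≤ C := by
    obtain ⟨C, hC⟩ := boundF hα hβ h hcont
    exact ⟨C, fun w hw => by rw [hfdef w hw, hBh]; exact hC w hw⟩
  exact ⟨part1, fun _ => ⟨fbound, fun g hgb hgd =>
    uniqSol hα hβ h Bh f g fbound hgb part1 hgd⟩⟩
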